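/- The matrix Z(0) = I_s − (Σ_{p=1}^c n_{jp}(m_p − n_{ip})/α_p)_{i,j} has rank exactly s − 1. -/

import Mathlib

open Finset

/-- `m_p = |V(T_p)|`: the number of vertices of `K_{n_1,…,n_s}` lying in the `p`-th component
of a spanning forest, where `comp` sends each vertex to the index of its component. -/
noncomputable def mP {s c : ℕ} (n : Fin s → ℕ) (comp : (Σ i, Fin (n i)) → Fin c)
    (p : Fin c) : ℕ :=
  Nat.card {v : Σ i, Fin (n i) // comp v = p}

/-- `n_{ip} = |X_i ∩ V(T_p)|`: the number of vertices of the `i`-th partition class lying in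
the `p`-th component. -/
noncomputable def nIP {s c : ℕ} (n : Fin s → ℕ) (comp : (Σ i, Fin (n i)) → Fin c)
    (i : Fin s) (p : Fin c) : ℕ :=
  Nat.card {v : Σ i, Fin (n i) // v.1 = i ∧ comp v = p}

/-- `α_p = n·m_p − Σ_i n_i·n_{ip}` (as a real number). -/
noncomputable def alphaR {s c : ℕ} (n : Fin s → ℕ) (comp : (Σ i, Fin (n i)) → Fin c)
    (p : Fin c) : ℝ :=
  (∑ i, (n i : ℝ)) * (mP n comp p) - ∑ i, (n i : ℝ) * (nIP n comp i p)

/-- The matrix `Z(0) = I_s − (Σ_p n_{jp}(m_p − n_{ip})/α_p)_{i,j}`. -/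
noncomputable def Zzero {s c : ℕ} (n : Fin s → ℕ) (comp : (Σ i, Fin (n i)) → Fin c) :
    Matrix (Fin s) (Fin s) ℝ :=
  1 - Matrix.of fun i j =>
    ∑ p, (nIP n comp j p : ℝ) * ((mP n comp p : ℝ) - (nIP n comp i p : ℝ)) / alphaR n comp p


section Aux
variable {s c : ℕ} (n : Fin s → ℕ) (comp : (Σ i, Fin (n i)) → Fin c)

lemma nIP_eq_card (i : Fin s) (p : Fin c) :
    nIP n comp i p = #(univ.filter fun v : Σ i, Fin (n i) => v.1 = i ∧ comp v = p) := by
  rw [nIP, Nat.card_eq_fintype_card, Fintype.card_subtype]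

lemma mP_nat (p : Fin c) : mP n comp p = ∑ i, nIP n comp i p := by
  rw [mP, Nat.card_eq_fintype_card, Fintype.card_subtype]
  rw [card_eq_sum_card_fiberwise (f := Sigma.fst) (t := univ) (fun x _ => mem_univ _)]
  refine Finset.sum_congr rfl fun i _ => ?_
  rw [nIP_eq_card, filter_filter]
  congr 1
  ext v
  simp only [mem_filter, mem_univ, true_and]
  tauto

lemma mP_eq_sum (p : Fin c) : (mP n comp p : ℝ) = ∑ i, (nIP n comp i p : ℝ) := by
  rw [mP_nat]; push_cast; rfl

lemma sum_nIP_nat (i : Fin s) : ∑ p, nIP n comp i p = n i := by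
  have h : ∀ p, nIP n comp i p =
      #((univ.filter fun v : Σ i, Fin (n i) => v.1 = i).filter fun v => comp v = p) := by
    intro p; rw [nIP_eq_card, filter_filter]
  rw [Finset.sum_congr rfl fun p _ => h p,
    ← card_eq_sum_card_fiberwise (f := comp) (t := univ) (fun x _ => mem_univ _)]
  have e : {v : Σ j, Fin (n j) // v.1 = i} ≃ Fin (n i) :=
    ⟨fun v => v.2 ▸ v.1.2, fun x => ⟨⟨i, x⟩, rfl⟩, by rintro ⟨⟨j, x⟩, rfl⟩; rfl, fun x => rfl⟩
  calc #(filter (fun v : Σ j, Fin (n j) => v.1 = i) univ)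
      = Fintype.card {v : Σ j, Fin (n j) // v.1 = i} := (Fintype.card_subtype _).symm
    _ = n i := by rw [Fintype.card_eq.mpr ⟨e⟩, Fintype.card_fin]

lemma sum_nIP (i : Fin s) : ∑ p, (nIP n comp i p : ℝ) = n i := by
  rw [← sum_nIP_nat n comp i]; push_cast; rfl

noncomputable def betaR (p q : Fin c) : ℝ :=
  (mP n comp p : ℝ) * (mP n comp q : ℝ) - ∑ i, (nIP n comp i p : ℝ) * (nIP n comp i q : ℝ)

lemma nIP_pos {v : Σ i, Fin (n i)} {p : Fin c} (h : comp v = p) :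
    1 ≤ nIP n comp v.1 p := by
  have : Nonempty {w : Σ i, Fin (n i) // w.1 = v.1 ∧ comp w = p} := ⟨⟨v, rfl, h⟩⟩
  exact Nat.one_le_iff_ne_zero.mpr (Nat.card_ne_zero.mpr ⟨this, inferInstance⟩)

lemma pair_le_mP {i j : Fin s} (hij : i ≠ j) (p : Fin c) :
    nIP n comp i p + nIP n comp j p ≤ mP n comp p := by
  rw [mP_nat]
  have : ({i, j} : Finset (Fin s)) ⊆ univ := subset_univ _
  calc nIP n comp i p + nIP n comp j p = ∑ k ∈ ({i, j} : Finset (Fin s)), nIP n comp k p := by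
        rw [Finset.sum_pair hij]
    _ ≤ ∑ k, nIP n comp k p := Finset.sum_le_sum_of_subset this

lemma nIP_le_mP (i : Fin s) (p : Fin c) : nIP n comp i p ≤ mP n comp p := by
  rw [mP_nat]
  exact Finset.single_le_sum (f := fun k => nIP n comp k p) (fun k _ => Nat.zero_le _) (mem_univ i)

lemma alphaR_eq (p : Fin c) :
    alphaR n comp p = ∑ i, (n i : ℝ) * ((mP n comp p : ℝ) - (nIP n comp i p : ℝ)) := by
  rw [alphaR]
  rw [Finset.sum_mul]
  rw [← Finset.sum_sub_distrib]
  exact Finset.sum_congr rfl fun i _ => by ring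

lemma alphaR_pos (hs : 2 ≤ s) (hn : ∀ i, 1 ≤ n i) (hsurj : Function.Surjective comp)
    (p : Fin c) : 0 < alphaR n comp p := by
  obtain ⟨v, hv⟩ := hsurj p
  obtain ⟨j, hj⟩ := Fintype.exists_ne_of_one_lt_card (by rw [Fintype.card_fin]; omega) v.1
  rw [alphaR_eq]
  refine Finset.sum_pos' (fun i _ => ?_) ⟨j, mem_univ j, ?_⟩
  · have h1 : (nIP n comp i p : ℝ) ≤ (mP n comp p : ℝ) := by
      exact_mod_cast nIP_le_mP n comp i p
    exact mul_nonneg (Nat.cast_nonneg _) (by linarith)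
  · have h2 : nIP n comp v.1 p + nIP n comp j p ≤ mP n comp p := pair_le_mP n comp (Ne.symm hj) p
    have h3 : 1 ≤ nIP n comp v.1 p := nIP_pos n comp hv
    have h4 : (1 : ℝ) ≤ (n j : ℝ) := by exact_mod_cast hn j
    have h5 : (1 : ℝ) ≤ (mP n comp p : ℝ) - (nIP n comp j p : ℝ) := by
      have : (nIP n comp v.1 p : ℝ) + (nIP n comp j p : ℝ) ≤ (mP n comp p : ℝ) := by
        exact_mod_cast h2
      have h3' : (1 : ℝ) ≤ (nIP n comp v.1 p : ℝ) := by exact_mod_cast h3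
      linarith
    nlinarith

lemma betaR_eq (p q : Fin c) :
    betaR n comp p q = ∑ i, (nIP n comp i p : ℝ) * ((mP n comp q : ℝ) - (nIP n comp i q : ℝ)) := by
  rw [betaR, mP_eq_sum n comp p, Finset.sum_mul, ← Finset.sum_sub_distrib]
  exact Finset.sum_congr rfl fun i _ => by ring

lemma betaR_symm (p q : Fin c) : betaR n comp p q = betaR n comp q p := by
  rw [betaR, betaR]
  congr 1
  · ring
  · exact Finset.sum_congr rfl fun i _ => by ring

lemma betaR_nonneg (p q : Fin c) : 0 ≤ betaR n comp p q := by
  rw [betaR_eq]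
  refine Finset.sum_nonneg fun i _ => mul_nonneg (Nat.cast_nonneg _) ?_
  have := nIP_le_mP n comp i q
  have : (nIP n comp i q : ℝ) ≤ (mP n comp q : ℝ) := by exact_mod_cast this
  linarith

lemma betaR_ge {i j : Fin s} (hij : i ≠ j) (p q : Fin c) :
    (nIP n comp i p : ℝ) * (nIP n comp j q : ℝ) ≤ betaR n comp p q := by
  rw [betaR_eq]
  have key : ∀ k, (0:ℝ) ≤ (nIP n comp k p : ℝ) * ((mP n comp q : ℝ) - (nIP n comp k q : ℝ)) := by
    intro k
    refine mul_nonneg (Nat.cast_nonneg _) ?_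
    have : (nIP n comp k q : ℝ) ≤ (mP n comp q : ℝ) := by exact_mod_cast nIP_le_mP n comp k q
    linarith
  have step : (nIP n comp i p : ℝ) * (nIP n comp j q : ℝ) ≤
      (nIP n comp i p : ℝ) * ((mP n comp q : ℝ) - (nIP n comp i q : ℝ)) := by
    have h2 : (nIP n comp i q : ℝ) + (nIP n comp j q : ℝ) ≤ (mP n comp q : ℝ) := by
      exact_mod_cast pair_le_mP n comp hij q
    have : (nIP n comp j q : ℝ) ≤ (mP n comp q : ℝ) - (nIP n comp i q : ℝ) := by
      have h0 : (0:ℝ) ≤ (nIP n comp i q : ℝ) := Nat.cast_nonneg _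
      linarith
    exact mul_le_mul_of_nonneg_left this (Nat.cast_nonneg _)
  calc (nIP n comp i p : ℝ) * (nIP n comp j q : ℝ) ≤ _ := step
    _ ≤ _ := Finset.single_le_sum (fun k _ => key k) (mem_univ i)

lemma sum_mP : ∑ q, (mP n comp q : ℝ) = ∑ i, (n i : ℝ) := by
  rw [Finset.sum_congr rfl fun q _ => mP_eq_sum n comp q, Finset.sum_comm]
  exact Finset.sum_congr rfl fun i _ => sum_nIP n comp i

lemma sum_betaR (p : Fin c) : ∑ q, betaR n comp p q = alphaR n comp p := by
  unfold betaR alphaR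
  rw [Finset.sum_sub_distrib, ← Finset.mul_sum, sum_mP, Finset.sum_comm]
  congr 1
  · ring
  · exact Finset.sum_congr rfl fun i _ => by rw [← Finset.mul_sum, sum_nIP]; ring

lemma Zzero_mulVec (v : Fin s → ℝ) (i : Fin s) :
    (Zzero n comp).mulVec v i =
      v i - ∑ p, ((mP n comp p : ℝ) - (nIP n comp i p : ℝ)) / alphaR n comp p
        * ∑ j, (nIP n comp j p : ℝ) * v j := by
  rw [Zzero, Matrix.sub_mulVec, Matrix.one_mulVec]
  simp only [Pi.sub_apply]
  congr 1
  rw [Matrix.mulVec, dotProduct]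
  simp only [Matrix.of_apply, Finset.sum_mul]
  rw [Finset.sum_comm]
  refine Finset.sum_congr rfl fun p _ => ?_
  rw [Finset.mul_sum]
  exact Finset.sum_congr rfl fun j _ => by ring

lemma inner_alpha (p : Fin c) :
    ∑ j, (nIP n comp j p : ℝ) * ((∑ k, (n k : ℝ)) - (n j : ℝ)) = alphaR n comp p := by
  rw [alphaR]
  rw [Finset.sum_congr rfl (fun j (_ : j ∈ univ) => by
    ring : ∀ j ∈ univ, (nIP n comp j p : ℝ) * ((∑ k, (n k : ℝ)) - (n j : ℝ))
      = (nIP n comp j p : ℝ) * (∑ k, (n k : ℝ)) - (nIP n comp j p : ℝ) * (n j : ℝ))]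
  rw [Finset.sum_sub_distrib, ← Finset.sum_mul, ← mP_eq_sum]
  congr 1
  · ring
  · exact Finset.sum_congr rfl fun j _ => by ring

lemma null_vec (hs : 2 ≤ s) (hn : ∀ i, 1 ≤ n i) (hsurj : Function.Surjective comp) :
    (Zzero n comp).mulVec (fun i => (∑ k, (n k : ℝ)) - (n i : ℝ)) = 0 := by
  funext i
  rw [Zzero_mulVec]
  simp only [Pi.zero_apply]
  have h1 : ∀ p : Fin c, ((mP n comp p : ℝ) - (nIP n comp i p : ℝ)) / alphaR n comp p
      * ∑ j, (nIP n comp j p : ℝ) * ((∑ k, (n k : ℝ)) - (n j : ℝ))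
      = (mP n comp p : ℝ) - (nIP n comp i p : ℝ) := by
    intro p
    rw [inner_alpha, div_mul_cancel₀]
    exact ne_of_gt (alphaR_pos n comp hs hn hsurj p)
  rw [Finset.sum_congr rfl fun p _ => h1 p, Finset.sum_sub_distrib, sum_mP, sum_nIP]
  ring

lemma ker_sub (hs : 2 ≤ s) (hn : ∀ i, 1 ≤ n i) (hsurj : Function.Surjective comp)
    (v : Fin s → ℝ) (hv : (Zzero n comp).mulVec v = 0) :
    ∃ t : ℝ, v = t • (fun i => (∑ k, (n k : ℝ)) - (n i : ℝ)) := by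
  have hA : ∀ p, 0 < alphaR n comp p := alphaR_pos n comp hs hn hsurj
  have hA' : ∀ p, alphaR n comp p ≠ 0 := fun p => ne_of_gt (hA p)
  set z : Fin c → ℝ := fun p => (∑ j, (nIP n comp j p : ℝ) * v j) / alphaR n comp p with hzdef
  -- v i = ∑ p (m_p - n_ip) * z p
  have hvz : ∀ i, v i = ∑ p, ((mP n comp p : ℝ) - (nIP n comp i p : ℝ)) * z p := by
    intro i
    have := congrFun hv i
    rw [Zzero_mulVec, Pi.zero_apply, sub_eq_zero] at this
    rw [this]
    exact Finset.sum_congr rfl fun p _ => by rw [hzdef]; ring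
  -- α_p z_p = ∑ q β_pq z_q
  have hy : ∀ p, alphaR n comp p * z p = ∑ q, betaR n comp p q * z q := by
    intro p
    have h1 : alphaR n comp p * z p = ∑ j, (nIP n comp j p : ℝ) * v j := by
      rw [hzdef]; field_simp
      rw [mul_comm, mul_div_assoc, div_self (hA' p), mul_one]
    rw [h1]
    have h2 : ∀ j, (nIP n comp j p : ℝ) * v j
        = ∑ q, (nIP n comp j p : ℝ) * (((mP n comp q : ℝ) - (nIP n comp j q : ℝ)) * z q) := by
      intro j
      rw [hvz j, Finset.mul_sum]
    rw [Finset.sum_congr rfl fun j _ => h2 j, Finset.sum_comm]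
    refine Finset.sum_congr rfl fun q _ => ?_
    rw [betaR_eq]
    rw [Finset.sum_mul]
    exact Finset.sum_congr rfl fun j _ => by ring
  -- quadratic form vanishes
  have hS : ∑ p, ∑ q, betaR n comp p q * (z p - z q) ^ 2 = 0 := by
    have h1 : ∀ p, ∑ q, betaR n comp p q * (z p - z q) ^ 2
        = (∑ q, betaR n comp p q) * z p ^ 2 - 2 * (z p * ∑ q, betaR n comp p q * z q)
          + ∑ q, betaR n comp p q * z q ^ 2 := by
      intro p
      rw [Finset.sum_mul, Finset.mul_sum, Finset.mul_sum, ← Finset.sum_sub_distrib,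
        ← Finset.sum_add_distrib]
      exact Finset.sum_congr rfl fun q _ => by ring
    rw [Finset.sum_congr rfl fun p _ => h1 p]
    rw [Finset.sum_add_distrib, Finset.sum_sub_distrib]
    have h2 : ∑ p, (∑ q, betaR n comp p q) * z p ^ 2 = ∑ p, alphaR n comp p * z p ^ 2 :=
      Finset.sum_congr rfl fun p _ => by rw [sum_betaR]
    have h3 : ∑ p, 2 * (z p * ∑ q, betaR n comp p q * z q)
        = 2 * ∑ p, alphaR n comp p * z p ^ 2 := by
      rw [Finset.mul_sum]
      exact Finset.sum_congr rfl fun p _ => by rw [← hy p]; ring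
    have h4 : ∑ p, ∑ q, betaR n comp p q * z q ^ 2 = ∑ p, alphaR n comp p * z p ^ 2 := by
      rw [Finset.sum_comm]
      refine Finset.sum_congr rfl fun q _ => ?_
      rw [← Finset.sum_mul]
      congr 1
      rw [Finset.sum_congr rfl fun p _ => betaR_symm n comp p q, sum_betaR]
    rw [h2, h3, h4]
    ring
  have hterm : ∀ p q, betaR n comp p q * (z p - z q) ^ 2 = 0 := by
    have hnn : ∀ p (_ : p ∈ (univ : Finset (Fin c))),
        0 ≤ ∑ q, betaR n comp p q * (z p - z q) ^ 2 := fun p _ =>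
      Finset.sum_nonneg fun q _ => mul_nonneg (betaR_nonneg n comp p q) (sq_nonneg _)
    intro p q
    have hp := (Finset.sum_eq_zero_iff_of_nonneg hnn).mp hS p (mem_univ p)
    have hnn2 : ∀ q (_ : q ∈ (univ : Finset (Fin c))),
        0 ≤ betaR n comp p q * (z p - z q) ^ 2 := fun q _ =>
      mul_nonneg (betaR_nonneg n comp p q) (sq_nonneg _)
    exact (Finset.sum_eq_zero_iff_of_nonneg hnn2).mp hp q (mem_univ q)
  have hzeq : ∀ p q, 0 < betaR n comp p q → z p = z q := by
    intro p q hb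
    have := hterm p q
    rcases mul_eq_zero.mp this with h | h
    · exact absurd h (ne_of_gt hb)
    · have := pow_eq_zero_iff (n := 2) (by norm_num) |>.mp h
      linarith [sub_eq_zero.mp this]
  -- connectivity
  have hbpos : ∀ {i j : Fin s} {p q : Fin c}, i ≠ j → 1 ≤ nIP n comp i p →
      1 ≤ nIP n comp j q → 0 < betaR n comp p q := by
    intro i j p q hij h1 h2
    have hb := betaR_ge n comp hij p q
    have h1' : (1:ℝ) ≤ (nIP n comp i p : ℝ) := by exact_mod_cast h1
    have h2' : (1:ℝ) ≤ (nIP n comp j q : ℝ) := by exact_mod_cast h2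
    nlinarith
  have hne : (⟨0, by omega⟩ : Fin s) ≠ ⟨1, by omega⟩ := by simp [Fin.ext_iff]
  set i0 : Fin s := ⟨0, by omega⟩
  set i1 : Fin s := ⟨1, by omega⟩
  set w0 : Σ j, Fin (n j) := ⟨i0, ⟨0, hn i0⟩⟩ with hw0
  set w1 : Σ j, Fin (n j) := ⟨i1, ⟨0, hn i1⟩⟩ with hw1
  set r0 := comp w0 with hr0def
  set r1 := comp w1 with hr1def
  have hnr0 : 1 ≤ nIP n comp i0 r0 := nIP_pos n comp (v := w0) rfl
  have hnr1 : 1 ≤ nIP n comp i1 r1 := nIP_pos n comp (v := w1) rfl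
  have hzr01 : z r0 = z r1 := hzeq r0 r1 (hbpos hne hnr0 hnr1)
  have hzr0 : ∀ p, z p = z r0 := by
    intro p
    obtain ⟨u, hu⟩ := hsurj p
    have h1 : 1 ≤ nIP n comp u.1 p := nIP_pos n comp hu
    by_cases hc : u.1 = i0
    · have hb : 0 < betaR n comp p r1 := hbpos (by rw [hc]; exact hne) h1 hnr1
      rw [hzeq p r1 hb, hzr01]
    · exact hzeq p r0 (hbpos hc h1 hnr0)
  refine ⟨z r0, funext fun i => ?_⟩
  rw [hvz i]
  simp only [Pi.smul_apply, smul_eq_mul]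
  calc ∑ p, ((mP n comp p : ℝ) - (nIP n comp i p : ℝ)) * z p
      = ∑ p, ((mP n comp p : ℝ) - (nIP n comp i p : ℝ)) * z r0 :=
        Finset.sum_congr rfl fun p _ => by rw [hzr0 p]
    _ = (∑ p, ((mP n comp p : ℝ) - (nIP n comp i p : ℝ))) * z r0 := (Finset.sum_mul _ _ _).symm
    _ = z r0 * ((∑ k, (n k : ℝ)) - (n i : ℝ)) := by
        rw [Finset.sum_sub_distrib, sum_mP, sum_nIP]; ring

end Aux

/-- The matrix `Z(0)` has rank exactly `s − 1`. -/
theorem stmt_12 (s : ℕ) (hs : 2 ≤ s) (n : Fin s → ℕ) (hn : ∀ i, 1 ≤ n i)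
    (F : SimpleGraph (Σ i, Fin (n i)))
    (hFG : F ≤ SimpleGraph.completeMultipartiteGraph (fun i => Fin (n i)))
    (hF : F.IsAcyclic)
    (c : ℕ) (comp : (Σ i, Fin (n i)) → Fin c)
    (hcomp : ∀ u v, comp u = comp v ↔ F.Reachable u v)
    (hsurj : Function.Surjective comp) :
    (Zzero n comp).rank = s - 1 := by
  classical
  set x : Fin s → ℝ := fun i => (∑ k, (n k : ℝ)) - (n i : ℝ) with hx
  have hne : (⟨0, by omega⟩ : Fin s) ≠ ⟨1, by omega⟩ := by simp [Fin.ext_iff]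
  set i0 : Fin s := ⟨0, by omega⟩
  set i1 : Fin s := ⟨1, by omega⟩
  have hx0 : x ≠ 0 := by
    intro h
    have h0 := congrFun h i0
    have hpair : (n i0 : ℝ) + (n i1 : ℝ) ≤ ∑ k, (n k : ℝ) := by
      have hsub : ∑ k ∈ ({i0, i1} : Finset (Fin s)), (n k : ℝ) ≤ ∑ k, (n k : ℝ) :=
        Finset.sum_le_sum_of_subset_of_nonneg (subset_univ _)
          (fun k _ _ => Nat.cast_nonneg _)
      rwa [Finset.sum_pair hne] at hsub
    have h1 : (1:ℝ) ≤ (n i1 : ℝ) := by exact_mod_cast hn i1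
    simp only [hx, Pi.zero_apply] at h0
    linarith
  have hker : LinearMap.ker (Matrix.mulVecLin (Zzero n comp)) = Submodule.span ℝ {x} := by
    apply le_antisymm
    · intro v hv
      rw [LinearMap.mem_ker, Matrix.mulVecLin_apply] at hv
      obtain ⟨t, ht⟩ := ker_sub n comp hs hn hsurj v hv
      rw [Submodule.mem_span_singleton]
      exact ⟨t, ht.symm⟩
    · rw [Submodule.span_le, Set.singleton_subset_iff, SetLike.mem_coe, LinearMap.mem_ker,
        Matrix.mulVecLin_apply]
      exact null_vec n comp hs hn hsurj
  have h1 : Module.finrank ℝ ↥(LinearMap.ker (Matrix.mulVecLin (Zzero n comp))) = 1 := by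
    rw [hker]; exact finrank_span_singleton hx0
  have h2 := LinearMap.finrank_range_add_finrank_ker (Matrix.mulVecLin (Zzero n comp))
  rw [h1, Module.finrank_fintype_fun_eq_card, Fintype.card_fin] at h2
  rw [Matrix.rank]
  omega
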